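/- arXiv:2208.07671 — 3 statements merged into one kernel-verified Lean document; each statement's English description precedes it below -/
import Mathlib

section
/- If the trust-bias parameters satisfy ε_k⁺ ≠ 1 or ε_k⁻ ≠ 0 for some displayed position k, then the IPW estimator (1/D) Σ c/θ_k using the true examination propensities θ_k is in general biased: its expectation equals γ_{q,d} + (1/D) Σ_k ((ε_k⁺ - ε_k⁻ - 1)γ_{q,d} + ε_k⁻), which differs from γ_{q,d} unless the trust-bias correction terms vanish. -/
/-- Expectation over D independent Bernoulli clicks with success probabilities `p i`. -/
noncomputable def expec {D : ℕ} (p : Fin D → ℝ) (f : (Fin D → Bool) → ℝ) : ℝ :=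
  ∑ c : Fin D → Bool, (∏ i, if c i then p i else 1 - p i) * f c

lemma expec_coord {D : ℕ} (p : Fin D → ℝ) (i : Fin D) :
    ∑ c : Fin D → Bool, (∏ j, if c j then p j else 1 - p j) * (if c i then (1:ℝ) else 0)
      = p i := by
  have key : ∑ c : Fin D → Bool,
      ∏ j, ((if c j then p j else 1 - p j) * (if j = i then (if c j then (1:ℝ) else 0) else 1))
      = ∏ j, ∑ b : Bool, ((if b then p j else 1 - p j) * (if j = i then (if b then (1:ℝ) else 0) else 1)) := by
    rw [Fintype.prod_sum]
  have lhs_eq : ∀ c : Fin D → Bool,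
      ∏ j, ((if c j then p j else 1 - p j) * (if j = i then (if c j then (1:ℝ) else 0) else 1))
      = (∏ j, if c j then p j else 1 - p j) * (if c i then (1:ℝ) else 0) := by
    intro c
    rw [Finset.prod_mul_distrib, Finset.prod_ite_eq' Finset.univ i
      (fun j => if c j then (1:ℝ) else 0)]
    simp
  have rhs_eq : ∏ j, ∑ b : Bool,
      ((if b then p j else 1 - p j) * (if j = i then (if b then (1:ℝ) else 0) else 1)) = p i := by
    rw [Finset.prod_eq_single i]
    · simp
    · intro j _ hj; simp [hj]
    · simp
  calc ∑ c : Fin D → Bool, (∏ j, if c j then p j else 1 - p j) * (if c i then (1:ℝ) else 0)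
      = ∑ c : Fin D → Bool,
        ∏ j, ((if c j then p j else 1 - p j) * (if j = i then (if c j then (1:ℝ) else 0) else 1)) := by
        exact (Finset.sum_congr rfl fun c _ => (lhs_eq c)).symm
    _ = p i := by rw [key, rhs_eq]

/-- under trust bias (ε⁺ ≠ 1 or ε⁻ ≠ 0 somewhere), the IPW estimator with
true propensities has expectation γ + (1/D) Σ ((ε⁺-ε⁻-1)γ + ε⁻). -/
theorem ipw_trust_biased (D : ℕ) (hD : 0 < D) (ks : Fin D → ℕ)
    (θ εp εm : ℕ → ℝ) (γ : ℝ)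
    (hθpos : ∀ k, 0 < θ k) (hθ1 : ∀ k, θ k ≤ 1)
    (hεp : ∀ k, εp k ∈ Set.Icc (0:ℝ) 1) (hεm : ∀ k, εm k ∈ Set.Icc (0:ℝ) 1)
    (hγ : γ ∈ Set.Icc (0:ℝ) 1)
    (hbias : ∃ i, εp (ks i) ≠ 1 ∨ εm (ks i) ≠ 0) :
    expec (fun i => θ (ks i) * ((εp (ks i) - εm (ks i)) * γ + εm (ks i)))
      (fun c => (1 / (D : ℝ)) * ∑ i, (if c i then (1:ℝ) else 0) / θ (ks i))
    = γ + (1 / (D : ℝ)) * ∑ i, ((εp (ks i) - εm (ks i) - 1) * γ + εm (ks i)) := by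
  set p : Fin D → ℝ := fun i => θ (ks i) * ((εp (ks i) - εm (ks i)) * γ + εm (ks i)) with hp
  have step : expec p (fun c => (1 / (D : ℝ)) * ∑ i, (if c i then (1:ℝ) else 0) / θ (ks i))
      = (1 / (D : ℝ)) * ∑ i, p i / θ (ks i) := by
    unfold expec
    simp only [Finset.mul_sum, Finset.sum_div]
    rw [Finset.sum_comm]
    congr 1
    ext i
    have h := expec_coord p i
    calc ∑ c : Fin D → Bool, (∏ j, if c j then p j else 1 - p j) *
            (1 / (D : ℝ) * ((if c i then (1:ℝ) else 0) / θ (ks i)))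
        = (1 / (D : ℝ) / θ (ks i)) *
            ∑ c : Fin D → Bool, (∏ j, if c j then p j else 1 - p j) * (if c i then (1:ℝ) else 0) := by
          rw [Finset.mul_sum]; exact Finset.sum_congr rfl fun c _ => by ring
      _ = 1 / (D : ℝ) * (p i / θ (ks i)) := by rw [h]; ring
  rw [step]
  have hpi : ∀ i, p i / θ (ks i) = (εp (ks i) - εm (ks i)) * γ + εm (ks i) := by
    intro i
    rw [hp]
    field_simp [(hθpos (ks i)).ne']
  have hsum : ∑ i, p i / θ (ks i) = ∑ i, ((εp (ks i) - εm (ks i)) * γ + εm (ks i)) :=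
    Finset.sum_congr rfl fun i _ => hpi i
  rw [hsum]
  have hDne : (D : ℝ) ≠ 0 := Nat.cast_ne_zero.mpr hD.ne'
  have hsplit : ∑ i : Fin D, ((εp (ks i) - εm (ks i)) * γ + εm (ks i))
      = (D : ℝ) * γ + ∑ i, ((εp (ks i) - εm (ks i) - 1) * γ + εm (ks i)) := by
    have h1 : ∀ i : Fin D, (εp (ks i) - εm (ks i)) * γ + εm (ks i)
        = γ + ((εp (ks i) - εm (ks i) - 1) * γ + εm (ks i)) := fun i => by ring
    rw [Finset.sum_congr rfl fun i _ => h1 i, Finset.sum_add_distrib, Finset.sum_const,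
      Finset.card_univ, Fintype.card_fin, nsmul_eq_mul]
  rw [hsplit]
  field_simp
end

section
/- Doubly robustness: assume α̃_k = α_k for all positions k in the data (the examination-trust product is correctly estimated) and β̂_k = β_k. Then the doubly robust estimator is unbiased whenever EITHER (i) α̂_k = α_k for all k, OR (ii) the imputation model is perfect, γ̂^imp_{q,d} = γ_{q,d}. -/
lemma sum_w {D : ℕ} (p : Fin D → ℝ) :
    ∑ c : Fin D → Bool, (∏ i, if c i then p i else 1 - p i) = 1 := by
  have t := Fintype.prod_sum (fun (i : Fin D) (b : Bool) => if b then p i else 1 - p i)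
  rw [← t]
  simp

lemma sum_ind {D : ℕ} (p : Fin D → ℝ) (i₀ : Fin D) :
    ∑ c : Fin D → Bool, (∏ i, if c i then p i else 1 - p i) *
      (if c i₀ then (1:ℝ) else 0) = p i₀ := by
  have key : ∀ c : Fin D → Bool,
      (∏ i, if c i then p i else 1 - p i) * (if c i₀ then (1:ℝ) else 0)
      = ∏ i, (if i = i₀ then ((if c i then p i else 1 - p i) * (if c i then (1:ℝ) else 0))
              else (if c i then p i else 1 - p i)) := by
    intro c
    rw [← Finset.mul_prod_erase Finset.univ _ (Finset.mem_univ i₀),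
        ← Finset.mul_prod_erase Finset.univ
          (fun i => (if i = i₀ then ((if c i then p i else 1 - p i) * (if c i then (1:ℝ) else 0))
              else (if c i then p i else 1 - p i))) (Finset.mem_univ i₀)]
    simp only [if_pos rfl]
    rw [mul_comm _ (if c i₀ then (1:ℝ) else 0), ← mul_assoc, mul_comm (if c i₀ then (1:ℝ) else 0)]
    congr 1
    exact Finset.prod_congr rfl (fun j hj => by
      simp [Finset.mem_erase.mp hj |>.1])
  simp_rw [key]
  have t := Fintype.prod_sum (fun (i : Fin D) (b : Bool) =>
      if i = i₀ then ((if b then p i else 1 - p i) * (if b then (1:ℝ) else 0))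
      else (if b then p i else 1 - p i))
  rw [← t]
  rw [Fintype.prod_eq_single i₀ (fun j hj => by simp [hj])]
  simp

/-- doubly robustness. If α̃_k = α_k and β̂_k = β_k for all positions in
the data, then the DR estimator is unbiased whenever either the propensity model is
correct (α̂_k = α_k for all k) or the imputation is perfect (γ̂^imp = γ). -/
theorem doubly_robust (D : ℕ) (hD : 0 < D) (ks : Fin D → ℕ)
    (α β αhat βhat αtilde : ℕ → ℝ) (γ γimp : ℝ)
    (hαhat : ∀ k, αhat k ≠ 0)
    (hp : ∀ i, α (ks i) * γ + β (ks i) ∈ Set.Icc (0:ℝ) 1)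
    (hta : ∀ i, αtilde (ks i) = α (ks i)) (hb : ∀ i, βhat (ks i) = β (ks i))
    (h : (∀ i, αhat (ks i) = α (ks i)) ∨ γimp = γ) :
    expec (fun i => α (ks i) * γ + β (ks i))
        (fun c => γimp + (1 / (D : ℝ)) *
          ∑ i, ((if c i then (1:ℝ) else 0) - βhat (ks i) - αtilde (ks i) * γimp) / αhat (ks i))
      = γ := by
  set p : Fin D → ℝ := fun i => α (ks i) * γ + β (ks i) with hpdef
  set W : (Fin D → Bool) → ℝ := fun c => ∏ i, if c i then p i else 1 - p i with hW
  set d : ℝ := 1 / (D : ℝ) with hd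
  set t : Fin D → (Fin D → Bool) → ℝ := fun i c =>
    ((if c i then (1:ℝ) else 0) - βhat (ks i) - αtilde (ks i) * γimp) / αhat (ks i) with ht
  have h1 : ∀ i : Fin D, ∑ c : Fin D → Bool, W c * t i c
      = (p i - βhat (ks i) - αtilde (ks i) * γimp) / αhat (ks i) := by
    intro i
    have e : ∀ c : Fin D → Bool, W c * t i c
        = (W c * (if c i then (1:ℝ) else 0)) * (αhat (ks i))⁻¹
          - W c * ((βhat (ks i) + αtilde (ks i) * γimp) * (αhat (ks i))⁻¹) := by
      intro c
      rw [ht]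
      simp only [div_eq_mul_inv]
      ring
    simp_rw [e]
    rw [Finset.sum_sub_distrib, ← Finset.sum_mul, ← Finset.sum_mul, sum_ind, sum_w,
      div_eq_mul_inv]
    ring
  have step : (∑ c : Fin D → Bool, W c * (γimp + d * ∑ i, t i c))
      = γimp + d * ∑ i, (p i - βhat (ks i) - αtilde (ks i) * γimp) / αhat (ks i) := by
    calc ∑ c : Fin D → Bool, W c * (γimp + d * ∑ i, t i c)
        = ∑ c : Fin D → Bool, (γimp * W c + d * ∑ i, W c * t i c) := by
          refine Finset.sum_congr rfl (fun c _ => ?_)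
          rw [mul_add, mul_comm (W c) γimp, mul_left_comm (W c) d, Finset.mul_sum]
      _ = γimp * (∑ c : Fin D → Bool, W c)
            + d * ∑ c : Fin D → Bool, ∑ i, W c * t i c := by
          rw [Finset.sum_add_distrib, ← Finset.mul_sum, ← Finset.mul_sum]
      _ = γimp + d * ∑ i, ∑ c : Fin D → Bool, W c * t i c := by
          rw [sum_w, mul_one, Finset.sum_comm]
      _ = γimp + d * ∑ i, (p i - βhat (ks i) - αtilde (ks i) * γimp) / αhat (ks i) := by
          rw [Finset.sum_congr rfl (fun i _ => h1 i)]
  have goal_eq : expec p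
      (fun c => γimp + d * ∑ i, t i c)
      = γimp + d * ∑ i, (p i - βhat (ks i) - αtilde (ks i) * γimp) / αhat (ks i) := step
  rw [show (fun c : Fin D → Bool => γimp + (1 / (D : ℝ)) *
          ∑ i, ((if c i then (1:ℝ) else 0) - βhat (ks i) - αtilde (ks i) * γimp) / αhat (ks i))
        = fun c => γimp + d * ∑ i, t i c from rfl, goal_eq]
  have hterm : ∀ i : Fin D, (p i - βhat (ks i) - αtilde (ks i) * γimp) / αhat (ks i)
      = α (ks i) * (γ - γimp) / αhat (ks i) := by
    intro i
    rw [hb, hta, hpdef]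
    ring_nf
  simp_rw [hterm]
  rcases h with hc | hc
  · have e2 : ∀ i : Fin D, α (ks i) * (γ - γimp) / αhat (ks i) = γ - γimp := by
      intro i
      rw [← hc i]
      exact mul_div_cancel_left₀ _ (hαhat _)
    simp_rw [e2, Finset.sum_const, Finset.card_univ, Fintype.card_fin, nsmul_eq_mul, hd]
    have : (D : ℝ) ≠ 0 := Nat.cast_ne_zero.mpr hD.ne'
    field_simp
    ring
  · subst hc
    simp
end

section
/- Under the assumption α̃_k = α_k and β̂_k = β_k for all k, the bias of the doubly robust estimator can be rearranged as (1/D) Σ_k Δ_{α_k}(γ_{q,d} - γ̂^imp_{q,d})/α̂_k, i.e., it is the product form in which each summand vanishes if either the propensity error Δ_{α_k} = α_k - α̂_k or the imputation error γ_{q,d} - γ̂^imp_{q,d} is zero. -/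
lemma sum_prod_eq {D : ℕ} (g : Fin D → Bool → ℝ) :
    (∑ c : Fin D → Bool, ∏ j, g j (c j)) = ∏ j, (g j true + g j false) := by
  rw [← Fintype.piFinset_univ, ← Finset.prod_univ_sum]
  simp [Fintype.sum_bool]

lemma expec_ind {D : ℕ} (p : Fin D → ℝ) (i : Fin D) :
    expec p (fun c => if c i then (1:ℝ) else 0) = p i := by
  unfold expec
  have : ∀ c : Fin D → Bool,
      (∏ j, if c j then p j else 1 - p j) * (if c i then (1:ℝ) else 0)
      = ∏ j, (fun j b => (if b then p j else 1 - p j) * (if j = i then (if b then (1:ℝ) else 0) else 1)) j (c j) := by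
    intro c
    rw [Finset.prod_mul_distrib]
    congr 1
    rw [Finset.prod_eq_single i (by intro b _ hb; simp [hb]) (by simp)]
    simp
  simp_rw [this]
  have h2 := sum_prod_eq (fun j b => (if b then p j else 1 - p j) * (if j = i then (if b then (1:ℝ) else 0) else 1))
  simp only [] at h2
  rw [h2, Finset.prod_eq_single i (by intro b _ hb; simp [hb]) (by simp)]
  simp

lemma expec_affine {D : ℕ} (p : Fin D → ℝ) (A B : ℝ) (u v : Fin D → ℝ) :
    expec p (fun c => A + B * ∑ i, (u i * (if c i then (1:ℝ) else 0) + v i))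
    = A + B * ∑ i, (u i * p i + v i) := by
  have hW : (∑ c : Fin D → Bool, ∏ i, if c i then p i else 1 - p i) = 1 := by
    have := sum_prod_eq (fun j b => if b then p j else 1 - p j)
    simp only [] at this
    rw [this]; simp
  have hI : ∀ i, (∑ c : Fin D → Bool,
      (∏ j, if c j then p j else 1 - p j) * (if c i then (1:ℝ) else 0)) = p i := by
    intro i; have := expec_ind p i; unfold expec at this; exact this
  unfold expec
  simp_rw [mul_add]
  rw [Finset.sum_add_distrib, ← Finset.sum_mul, hW, one_mul]
  congr 1
  simp_rw [mul_left_comm _ B]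
  rw [← Finset.mul_sum]
  congr 1
  simp_rw [Finset.mul_sum]
  rw [Finset.sum_comm]
  refine Finset.sum_congr rfl fun i _ => ?_
  simp_rw [mul_add]
  rw [Finset.sum_add_distrib, ← Finset.sum_mul, hW, one_mul]
  simp_rw [mul_left_comm _ (u i)]
  rw [← Finset.mul_sum, hI]

/-- with α̃_k = α_k and β̂_k = β_k, the bias of the DR estimator takes
the product form (1/D) Σ Δα_k (γ - γ̂^imp)/α̂_k. -/
theorem dr_bias_product_form (D : ℕ) (hD : 0 < D) (ks : Fin D → ℕ)
    (α β αhat βhat αtilde : ℕ → ℝ) (γ γimp : ℝ)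
    (hαhat : ∀ k, αhat k ≠ 0)
    (hp : ∀ i, α (ks i) * γ + β (ks i) ∈ Set.Icc (0:ℝ) 1)
    (hta : ∀ i, αtilde (ks i) = α (ks i)) (hb : ∀ i, βhat (ks i) = β (ks i)) :
    expec (fun i => α (ks i) * γ + β (ks i))
        (fun c => γimp + (1 / (D : ℝ)) *
          ∑ i, ((if c i then (1:ℝ) else 0) - βhat (ks i) - αtilde (ks i) * γimp) / αhat (ks i))
      - γ
    = (1 / (D : ℝ)) * ∑ i,
        (α (ks i) - αhat (ks i)) * (γ - γimp) / αhat (ks i) := by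
  have hfun : (fun c : Fin D → Bool => γimp + (1 / (D : ℝ)) *
          ∑ i, ((if c i then (1:ℝ) else 0) - βhat (ks i) - αtilde (ks i) * γimp) / αhat (ks i))
      = (fun c : Fin D → Bool => γimp + (1 / (D : ℝ)) *
          ∑ i, ((1 / αhat (ks i)) * (if c i then (1:ℝ) else 0)
            + (-((β (ks i) + α (ks i) * γimp) / αhat (ks i))))) := by
    funext c
    congr 1
    congr 1
    refine Finset.sum_congr rfl fun i _ => ?_
    rw [hta i, hb i]
    field_simp
    ring
  rw [hfun, expec_affine]
  have hs : ∀ i ∈ Finset.univ,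
      (1 / αhat (ks i)) * (α (ks i) * γ + β (ks i))
        + (-((β (ks i) + α (ks i) * γimp) / αhat (ks i)))
      = (α (ks i) - αhat (ks i)) * (γ - γimp) / αhat (ks i) + (γ - γimp) := by
    intro i _
    field_simp [hαhat (ks i)]
    ring
  rw [Finset.sum_congr rfl hs, Finset.sum_add_distrib, Finset.sum_const,
    Finset.card_univ, Fintype.card_fin, nsmul_eq_mul]
  have hD' : (D : ℝ) ≠ 0 := Nat.cast_ne_zero.mpr hD.ne'
  field_simp
  ring_nf
  refine Finset.sum_congr rfl fun x _ => ?_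
  ring
end
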